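/- Let f : [0,1) → [0,1) be a bijection that is a piecewise translation with respect to a finite partition of [0,1) into half-open intervals (on each partition interval, f(x) = x + c for a constant c), and let s ∈ ℝ with 1/2 < s ≤ 1. Then there exist real numbers a < b with (a,b) ⊆ (0,s) and f((a,b)) ⊆ (0,s). -/

import Mathlib

theorem stmt_13 (n : ℕ) (x : Fin (n + 1) → ℝ) (hmono : StrictMono x)
    (h0 : x 0 = 0) (h1 : x (Fin.last n) = 1)
    (f : ℝ → ℝ) (hbij : Set.BijOn f (Set.Ico 0 1) (Set.Ico 0 1))
    (c : Fin n → ℝ)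
    (htrans : ∀ j : Fin n, ∀ y ∈ Set.Ico (x j.castSucc) (x j.succ), f y = y + c j)
    (s : ℝ) (hs1 : 1/2 < s) (hs2 : s ≤ 1) :
    ∃ a b : ℝ, a < b ∧ Set.Ioo a b ⊆ Set.Ioo 0 s ∧
      f '' Set.Ioo a b ⊆ Set.Ioo 0 s := by
  have hs0 : (0:ℝ) < s := by linarith
  have hxnn : ∀ i : Fin (n+1), 0 ≤ x i := by
    intro i
    have := hmono.monotone (Fin.zero_le i)
    rw [h0] at this; exact this
  have hxle1 : ∀ i : Fin (n+1), x i ≤ 1 := by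
    intro i
    have := hmono.monotone (Fin.le_last i)
    rw [h1] at this; exact this
  -- every point of [0,1) lies in some partition interval
  have hex : ∀ y ∈ Set.Ico (0:ℝ) 1, ∃ j : Fin n,
      y ∈ Set.Ico (x j.castSucc) (x j.succ) := by
    intro y hy
    classical
    set S : Finset (Fin (n+1)) := Finset.univ.filter (fun i => x i ≤ y) with hS
    have h0S : (0 : Fin (n+1)) ∈ S := by
      simp only [hS, Finset.mem_filter, Finset.mem_univ, true_and, h0]
      exact hy.1
    set j := S.max' ⟨0, h0S⟩ with hj
    have hjS : j ∈ S := S.max'_mem _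
    have hxj : x j ≤ y := by
      simpa only [hS, Finset.mem_filter, Finset.mem_univ, true_and] using hjS
    have hjne : j ≠ Fin.last n := by
      intro h
      rw [h, h1] at hxj
      exact absurd hy.2 (not_lt.2 hxj)
    obtain ⟨k, hk⟩ := Fin.exists_castSucc_eq.mpr hjne
    refine ⟨k, by rw [hk]; exact hxj, ?_⟩
    by_contra hlt
    push_neg at hlt
    have hkS : k.succ ∈ S := by
      simp only [hS, Finset.mem_filter, Finset.mem_univ, true_and]
      exact hlt
    have := S.le_max' _ hkS
    rw [← hj, ← hk] at this
    exact absurd (lt_of_lt_of_le ((Fin.castSucc_lt_succ (i := k))) this) (lt_irrefl _)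
  -- key claim: some partition interval meets [0,s) and its translate starts below s
  have key : ∃ j : Fin n, x j.castSucc < s ∧ x j.castSucc + c j < s := by
    by_contra hcon
    push_neg at hcon
    -- then f maps [0,s) into [s,1)
    have himg : f '' Set.Ico 0 s ⊆ Set.Ico s 1 := by
      rintro _ ⟨y, hy, rfl⟩
      have hy01 : y ∈ Set.Ico (0:ℝ) 1 := ⟨hy.1, lt_of_lt_of_le hy.2 hs2⟩
      obtain ⟨j, hj⟩ := hex y hy01
      have hxjs : x j.castSucc < s := lt_of_le_of_lt hj.1 hy.2
      have hcj := hcon j hxjs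
      have hfy := hbij.mapsTo hy01
      rw [htrans j y hj] at hfy ⊢
      exact ⟨by linarith [hj.1], hfy.2⟩
    -- measure computation
    set A : Fin n → Set ℝ := fun j =>
      Set.Ico (x j.castSucc) (min (x j.succ) s) with hA
    have hAeq : ∀ j, A j = Set.Ico (x j.castSucc) (x j.succ) ∩ Set.Ico 0 s := by
      intro j
      rw [Set.Ico_inter_Ico, max_eq_left (hxnn _)]
    have hAsub : ∀ j, A j ⊆ Set.Ico (x j.castSucc) (x j.succ) := by
      intro j y hy
      rw [hAeq j] at hy; exact hy.1
    have hAsub01 : ∀ j, A j ⊆ Set.Ico 0 1 := by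
      intro j y hy
      rw [hAeq j] at hy
      exact ⟨hy.2.1, lt_of_lt_of_le hy.2.2 hs2⟩
    have hUnion : (⋃ j, A j) = Set.Ico (0:ℝ) s := by
      apply Set.Subset.antisymm
      · exact Set.iUnion_subset fun j y hy => by rw [hAeq j] at hy; exact hy.2
      · intro y hy
        obtain ⟨j, hj⟩ := hex y ⟨hy.1, lt_of_lt_of_le hy.2 hs2⟩
        exact Set.mem_iUnion.2 ⟨j, by rw [hAeq j]; exact ⟨hj, hy⟩⟩
    have hApd : Pairwise (Function.onFun Disjoint A) := by
      intro i j hij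
      rcases hij.lt_or_gt with h | h
      · apply Set.Ico_disjoint_Ico.2
        have : x i.succ ≤ x j.castSucc := hmono.monotone (Fin.succ_le_castSucc_iff.2 h)
        calc min (min (x i.succ) s) (min (x j.succ) s) ≤ min (x i.succ) s :=
              min_le_left _ _
          _ ≤ x i.succ := min_le_left _ _
          _ ≤ x j.castSucc := this
          _ ≤ max (x i.castSucc) (x j.castSucc) := le_max_right _ _
      · apply Set.Ico_disjoint_Ico.2
        have : x j.succ ≤ x i.castSucc := hmono.monotone (Fin.succ_le_castSucc_iff.2 h)
        calc min (min (x i.succ) s) (min (x j.succ) s) ≤ min (x j.succ) s :=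
              min_le_right _ _
          _ ≤ x j.succ := min_le_left _ _
          _ ≤ x i.castSucc := this
          _ ≤ max (x i.castSucc) (x j.castSucc) := le_max_left _ _
    have hfA : ∀ j, f '' A j = Set.Ico (x j.castSucc + c j) (min (x j.succ) s + c j) := by
      intro j
      have : f '' A j = (fun y => y + c j) '' A j := by
        apply Set.image_congr
        intro y hy
        exact htrans j y (hAsub j hy)
      rw [this, hA]
      exact Set.image_add_const_Ico _ _ _
    have hfApd : Pairwise (Function.onFun Disjoint (fun j => f '' A j)) := by
      intro i j hij
      exact (hApd hij).image hbij.injOn (hAsub01 i) (hAsub01 j)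
    have hmeasA : ∀ j, MeasurableSet (A j) := fun j => measurableSet_Ico
    have hmeasfA : ∀ j, MeasurableSet (f '' A j) := by
      intro j; rw [hfA j]; exact measurableSet_Ico
    have hvol : ∀ j, MeasureTheory.volume (f '' A j) = MeasureTheory.volume (A j) := by
      intro j
      rw [hfA j, hA]
      simp only [Real.volume_Ico]
      ring_nf
    have himgU : f '' Set.Ico 0 s = ⋃ j, f '' A j := by
      rw [← hUnion, Set.image_iUnion]
    have hμ1 : MeasureTheory.volume (f '' Set.Ico (0:ℝ) s) =
        MeasureTheory.volume (Set.Ico (0:ℝ) s) := by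
      rw [himgU, MeasureTheory.measure_iUnion hfApd hmeasfA, ← hUnion,
        MeasureTheory.measure_iUnion hApd hmeasA]
      exact tsum_congr hvol
    have hle : MeasureTheory.volume (f '' Set.Ico (0:ℝ) s) ≤
        MeasureTheory.volume (Set.Ico s 1) := MeasureTheory.measure_mono himg
    rw [hμ1] at hle
    simp only [Real.volume_Ico, sub_zero] at hle
    have := (ENNReal.ofReal_le_ofReal_iff (by linarith)).1 hle
    linarith
  -- construct the interval
  obtain ⟨j, hjs, hjcs⟩ := key
  set a := x j.castSucc with ha
  set b := min (x j.succ) (min s (s - c j)) with hb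
  have hax : (0:ℝ) ≤ a := hxnn _
  have hab : a < b := by
    apply lt_min (hmono (Fin.castSucc_lt_succ (i := j)))
    exact lt_min hjs (by linarith)
  have hfx0 : 0 ≤ a + c j := by
    have ha01 : a ∈ Set.Ico (0:ℝ) 1 := by
      refine ⟨hax, ?_⟩
      exact lt_of_lt_of_le (hmono (Fin.castSucc_lt_succ (i := j))) (hxle1 _)
    have := (hbij.mapsTo ha01).1
    rwa [htrans j a ⟨le_refl _, hmono (Fin.castSucc_lt_succ (i := j))⟩] at this
  refine ⟨a, b, hab, ?_, ?_⟩
  · intro y hy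
    exact ⟨lt_of_le_of_lt hax hy.1,
      lt_of_lt_of_le hy.2 (le_trans (min_le_right _ _) (min_le_left _ _))⟩
  · rintro _ ⟨y, hy, rfl⟩
    have hyI : y ∈ Set.Ico (x j.castSucc) (x j.succ) :=
      ⟨hy.1.le, lt_of_lt_of_le hy.2 (min_le_left _ _)⟩
    rw [htrans j y hyI]
    constructor
    · have : a < y := hy.1
      linarith
    · have : y < s - c j :=
        lt_of_lt_of_le hy.2 (le_trans (min_le_right _ _) (min_le_right _ _))
      linarith
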